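/- The discrete Virasoro operators L_j (j ≥ 0), acting on polynomials (or formal power series) in infinitely many variables t_1, t_2, ..., defined by L_j = (1/N²)(2j ∂/∂t_j + Σ_{l=1}^{j-1} l(j-l) ∂²/∂t_{j-l}∂t_l) + Σ_{k≥1} (k+j) t_k ∂/∂t_{k+j}, satisfy the Virasoro commutation relations [L_j, L_l] = (j - l) L_{j+l}. -/

import Mathlib

open MvPolynomial

/-- The discrete Virasoro operator `L_j` acting on `ℂ[t_1, t_2, ...]`
(variables indexed by `ℕ`, with `t_0` unused and `∂_{t_0}` interpreted as `0`):
`L_j = (1/N²)(2j ∂_{t_j} + Σ_{l=1}^{j-1} l(j-l) ∂_{t_{j-l}} ∂_{t_l}) + Σ_{k≥1} (k+j) t_k ∂_{t_{k+j}}`. -/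
noncomputable def virasoroL (N : ℂ) (j : ℕ) (P : MvPolynomial ℕ ℂ) : MvPolynomial ℕ ℂ :=
  (1 / N ^ 2) • ((2 * (j : ℂ)) • pderiv j P
      + ∑ l ∈ Finset.Ico 1 j, ((l * (j - l) : ℕ) : ℂ) • pderiv (j - l) (pderiv l P))
    + ∑ᶠ k : ℕ, if 1 ≤ k then ((k + j : ℕ) : ℂ) • (X k * pderiv (k + j) P) else 0

namespace VirasoroProof
open Finset
noncomputable section

local notation "R" => MvPolynomial ℕ ℂ

def D (a : ℕ) : Module.End ℂ R := (pderiv a).toLinearMap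
def M (k : ℕ) : Module.End ℂ R := LinearMap.mulLeft ℂ (X k : R)

@[simp] lemma D_apply (a : ℕ) (P : R) : D a P = pderiv a P := rfl
@[simp] lemma M_apply (k : ℕ) (P : R) : M k P = X k * P := rfl

lemma pderiv_comm' (a b : ℕ) (P : R) :
    pderiv a (pderiv b P) = pderiv b (pderiv a P) := by
  induction P using MvPolynomial.induction_on with
  | C c => simp
  | add p q hp hq => simp [hp, hq]
  | mul_X p i hp =>
    have hXa : pderiv a (X i : R) = C (if i = a then 1 else 0) := by
      split_ifs with h <;> simp [h, pderiv_X_of_ne]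
    have hXb : pderiv b (X i : R) = C (if i = b then 1 else 0) := by
      split_ifs with h <;> simp [h, pderiv_X_of_ne]
    simp only [pderiv_mul, map_add, hXa, hXb, hp, pderiv_C]
    ring

lemma D_M_poly (a k : ℕ) (P : R) :
    pderiv a (X k * P) = X k * pderiv a P + if a = k then P else 0 := by
  rw [pderiv_mul]
  by_cases h : a = k
  · subst h; simp [add_comm]
  · simp [pderiv_X_of_ne (Ne.symm h), h]

lemma commute_D (a b : ℕ) : Commute (D a) (D b) :=
  LinearMap.ext fun P => pderiv_comm' a b P

lemma opD_MD (b k m : ℕ) :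
    D b * (M k * D m) = M k * D m * D b + if b = k then D m else 0 := by
  refine LinearMap.ext fun P => ?_
  simp only [Module.End.mul_apply, D_apply, M_apply, LinearMap.add_apply, D_M_poly,
    apply_ite (fun f : Module.End ℂ R => f P), LinearMap.zero_apply, Module.End.one_apply]
  rw [pderiv_comm']

lemma opDD_MD (a b k m : ℕ) :
    D a * D b * (M k * D m) = M k * D m * (D a * D b)
      + ((if a = k then D b * D m else 0) + (if b = k then D a * D m else 0)) := by
  refine LinearMap.ext fun P => ?_
  simp only [Module.End.mul_apply, D_apply, M_apply, LinearMap.add_apply, D_M_poly,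
    apply_ite (fun f : Module.End ℂ R => f P), LinearMap.zero_apply, map_add,
    apply_ite (pderiv a), map_zero]
  have h1 : pderiv a (pderiv b (pderiv m P)) = pderiv m (pderiv a (pderiv b P)) := by
    rw [pderiv_comm' b m, pderiv_comm' a m]
  rw [h1]
  ring

lemma opMD_MD (k a k' b : ℕ) :
    M k * D a * (M k' * D b) = M k * (M k' * (D a * D b))
      + if a = k' then M k * D b else 0 := by
  refine LinearMap.ext fun P => ?_
  simp only [Module.End.mul_apply, D_apply, M_apply, LinearMap.add_apply, D_M_poly,
    apply_ite (fun f : Module.End ℂ R => f P), LinearMap.zero_apply, mul_add,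
    apply_ite (fun q : R => X k * q), mul_zero]

lemma opMMDD_comm (k k' a b : ℕ) :
    M k * (M k' * (D a * D b)) = M k' * (M k * (D b * D a)) := by
  refine LinearMap.ext fun P => ?_
  simp only [Module.End.mul_apply, D_apply, M_apply]
  rw [pderiv_comm']
  ring

/-! ### Operators -/

def Top (j : ℕ) : Module.End ℂ R :=
  (2 * (j : ℂ)) • D j + ∑ a ∈ Ico 1 j, ((a * (j - a) : ℕ) : ℂ) • (D (j - a) * D a)

def Aop (N : ℂ) (j : ℕ) : Module.End ℂ R := (1 / N ^ 2) • Top j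

def Bop (n j : ℕ) : Module.End ℂ R :=
  ∑ k ∈ Ico 1 (n + 1), ((k + j : ℕ) : ℂ) • (M k * D (k + j))

def Lop (N : ℂ) (n j : ℕ) : Module.End ℂ R := Aop N j + Bop n j

def Bdd (n : ℕ) (Q : R) : Prop := ∀ m, n < m → pderiv m Q = 0

/-! ### The Cop identity -/

def Cop (j l : ℕ) : Module.End ℂ R :=
  (2 * (j : ℂ) * ((j + l : ℕ) : ℂ)) • D (j + l)
  + ∑ a ∈ Ico 1 j, (((a * (j - a) : ℕ) : ℂ) * ((j - a + l : ℕ) : ℂ)) • (D a * D (j - a + l))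
  + ∑ a ∈ Ico 1 j, (((a * (j - a) : ℕ) : ℂ) * ((a + l : ℕ) : ℂ)) • (D (j - a) * D (a + l))

lemma cast_tsub_sub (a b : ℕ) : ((a - b : ℕ) : ℂ) - ((b - a : ℕ) : ℂ) = (a : ℂ) - (b : ℂ) := by
  rcases le_total a b with h | h
  · rw [Nat.sub_eq_zero_of_le h, Nat.cast_sub h]; simp
  · rw [Nat.sub_eq_zero_of_le h, Nat.cast_sub h]; simp

lemma sumA_eq_sumB (j l : ℕ) :
    (∑ a ∈ Ico 1 j, (((a * (j - a) : ℕ) : ℂ) * ((j - a + l : ℕ) : ℂ)) • (D a * D (j - a + l)))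
    = ∑ a ∈ Ico 1 j, (((a * (j - a) : ℕ) : ℂ) * ((a + l : ℕ) : ℂ)) • (D (j - a) * D (a + l)) := by
  have h1 : (∑ a ∈ Ico 1 j, (((a * (j - a) : ℕ) : ℂ) * ((j - a + l : ℕ) : ℂ)) • (D a * D (j - a + l)))
      = ∑ a ∈ Ico 1 j, (fun c => (((c * (j - c) : ℕ) : ℂ) * ((c + l : ℕ) : ℂ)) • (D (j - c) * D (c + l))) (j - a) := by
    refine Finset.sum_congr rfl fun a ha => ?_
    have haj : a < j := (mem_Ico.mp ha).2
    simp only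
    rw [Nat.sub_sub_self haj.le, Nat.mul_comm]
  refine h1.trans ?_
  refine (Finset.sum_Ico_reflect (fun c => (((c * (j - c) : ℕ) : ℂ) * ((c + l : ℕ) : ℂ)) • (D (j - c) * D (c + l))) 1 (by omega : j ≤ j + 1)).trans ?_
  have e1 : j + 1 - j = 1 := by omega
  rw [e1, Nat.add_sub_cancel]

lemma sumB_conv (j l : ℕ) :
    (∑ a ∈ Ico 1 j, (((a * (j - a) : ℕ) : ℂ) * ((a + l : ℕ) : ℂ)) • (D (j - a) * D (a + l)))
    = ∑ c ∈ Ico 1 (j + l), ((((c - l) * (j + l - c) : ℕ) : ℂ) * ((c : ℕ) : ℂ)) • (D (j + l - c) * D c) := by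
  have h1 : (∑ a ∈ Ico 1 j, (((a * (j - a) : ℕ) : ℂ) * ((a + l : ℕ) : ℂ)) • (D (j - a) * D (a + l)))
      = ∑ a ∈ Ico 1 j, (fun c => ((((c - l) * (j + l - c) : ℕ) : ℂ) * ((c : ℕ) : ℂ)) • (D (j + l - c) * D c)) (l + a) := by
    refine Finset.sum_congr rfl fun a ha => ?_
    simp only
    have e1 : l + a - l = a := by omega
    have e2 : j + l - (l + a) = j - a := by omega
    rw [e1, e2, Nat.add_comm l a]
  refine h1.trans ?_
  refine (Finset.sum_Ico_add (fun c => ((((c - l) * (j + l - c) : ℕ) : ℂ) * ((c : ℕ) : ℂ)) • (D (j + l - c) * D c)) 1 j l).trans ?_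
  refine (Finset.sum_subset (Finset.Ico_subset_Ico (by omega) (by omega)) ?_)
  intro c hc1 hc2
  simp only [mem_Ico] at hc1 hc2
  have : c - l = 0 := by omega
  rw [this]; simp

lemma c_reflect (j l : ℕ) :
    (∑ c ∈ Ico 1 (j + l), ((((c - l) * (j + l - c) : ℕ) : ℂ) * ((c : ℕ) : ℂ)) • (D (j + l - c) * D c))
    = ∑ c ∈ Ico 1 (j + l), ((((j - c) * c : ℕ) : ℂ) * ((j + l - c : ℕ) : ℂ)) • (D (j + l - c) * D c) := by
  symm
  have h1 : (∑ c ∈ Ico 1 (j + l), ((((j - c) * c : ℕ) : ℂ) * ((j + l - c : ℕ) : ℂ)) • (D (j + l - c) * D c))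
      = ∑ c ∈ Ico 1 (j + l), (fun t => ((((t - l) * (j + l - t) : ℕ) : ℂ) * ((t : ℕ) : ℂ)) • (D (j + l - t) * D t)) (j + l - c) := by
    refine Finset.sum_congr rfl fun c hc => ?_
    obtain ⟨hc1, hc2⟩ := mem_Ico.mp hc
    simp only
    have e1 : j + l - c - l = j - c := by omega
    have e2 : j + l - (j + l - c) = c := by omega
    rw [e1, e2, (commute_D (j + l - c) c).eq]
  refine h1.trans ?_
  refine (Finset.sum_Ico_reflect (fun t => ((((t - l) * (j + l - t) : ℕ) : ℂ) * ((t : ℕ) : ℂ)) • (D (j + l - t) * D t)) 1 (by omega : j + l ≤ j + l + 1)).trans ?_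
  have e3 : j + l + 1 - (j + l) = 1 := by omega
  rw [e3, Nat.add_sub_cancel]

lemma Cop_exp (j l : ℕ) : Cop j l = (2 * (j : ℂ) * ((j + l : ℕ) : ℂ)) • D (j + l)
    + ∑ c ∈ Ico 1 (j + l), (((((c - l) * (j + l - c) : ℕ) : ℂ) * ((c : ℕ) : ℂ))
        + (((j - c) * c : ℕ) : ℂ) * ((j + l - c : ℕ) : ℂ)) • (D (j + l - c) * D c) := by
  rw [Cop, sumA_eq_sumB, sumB_conv, add_assoc]
  congr 1
  nth_rewrite 2 [c_reflect j l]
  rw [← Finset.sum_add_distrib]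
  exact Finset.sum_congr rfl fun c _ => (add_smul _ _ _).symm

set_option maxHeartbeats 1000000 in
lemma core (j l : ℕ) : Cop j l - Cop l j = ((j : ℂ) - (l : ℂ)) • Top (j + l) := by
  have e2 := Cop_exp l j
  rw [Nat.add_comm l j] at e2
  rw [Cop_exp j l, e2]
  rw [Top]
  rw [smul_add]
  rw [add_sub_add_comm]
  refine congrArg₂ (· + ·) ?_ ?_
  · match_scalars
    ring
  · rw [← Finset.sum_sub_distrib, Finset.smul_sum]
    refine Finset.sum_congr rfl fun c hc => ?_
    have h1 := cast_tsub_sub c l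
    have h2 := cast_tsub_sub j c
    match_scalars
    linear_combination ((j + l - c : ℕ) : ℂ) * ((c : ℕ) : ℂ) * (h1 + h2)


lemma ssub (r : ℂ) (x y : Module.End ℂ R) : r • x - r • y = r • (x - y) := by module
lemma ssmul (r s : ℂ) (x : Module.End ℂ R) : r • s • x = (r * s) • x := by module

/-! ### brackets with Bop -/

lemma opD_B (n b l : ℕ) :
    D b * Bop n l = Bop n l * D b
      + if b ∈ Ico 1 (n + 1) then ((b + l : ℕ) : ℂ) • D (b + l) else 0 := by
  rw [Bop, Finset.mul_sum, Finset.sum_mul]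
  have key : ∀ k ∈ Ico 1 (n + 1), D b * (((k + l : ℕ) : ℂ) • (M k * D (k + l)))
      = ((k + l : ℕ) : ℂ) • (M k * D (k + l)) * D b
        + (if b = k then ((k + l : ℕ) : ℂ) • D (k + l) else 0) := by
    intro k _
    rw [mul_smul_comm, opD_MD, smul_add, smul_mul_assoc]
    congr 1
    split_ifs <;> simp
  rw [Finset.sum_congr rfl key, Finset.sum_add_distrib]
  congr 1
  exact Finset.sum_ite_eq (Ico 1 (n + 1)) b (fun k => ((k + l : ℕ) : ℂ) • D (k + l))

lemma opDD_B (n a b l : ℕ) (ha : a ∈ Ico 1 (n + 1)) (hb : b ∈ Ico 1 (n + 1)) :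
    (D a * D b) * Bop n l = Bop n l * (D a * D b)
      + (((a + l : ℕ) : ℂ) • (D b * D (a + l)) + ((b + l : ℕ) : ℂ) • (D a * D (b + l))) := by
  rw [Bop, Finset.mul_sum, Finset.sum_mul]
  have key : ∀ k ∈ Ico 1 (n + 1), (D a * D b) * (((k + l : ℕ) : ℂ) • (M k * D (k + l)))
      = ((k + l : ℕ) : ℂ) • (M k * D (k + l)) * (D a * D b)
        + ((if a = k then ((k + l : ℕ) : ℂ) • (D b * D (k + l)) else 0)
          + (if b = k then ((k + l : ℕ) : ℂ) • (D a * D (k + l)) else 0)) := by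
    intro k _
    rw [mul_smul_comm, opDD_MD, smul_add, smul_mul_assoc, smul_add]
    congr 2
    · split_ifs <;> simp
    · split_ifs <;> simp
  rw [Finset.sum_congr rfl key, Finset.sum_add_distrib]
  congr 1
  rw [Finset.sum_add_distrib]
  congr 1
  · rw [Finset.sum_ite_eq (Ico 1 (n + 1)) a (fun k => ((k + l : ℕ) : ℂ) • (D b * D (k + l))),
      if_pos ha]
  · rw [Finset.sum_ite_eq (Ico 1 (n + 1)) b (fun k => ((k + l : ℕ) : ℂ) • (D a * D (k + l))),
      if_pos hb]

set_option maxHeartbeats 1000000 in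
lemma T_B_bracket (n j l : ℕ) (h : j + l ≤ n) :
    Top j * Bop n l - Bop n l * Top j = Cop j l := by
  rw [Top, add_mul, mul_add, smul_mul_assoc, mul_smul_comm, Finset.sum_mul, Finset.mul_sum]
  have lin : (2 * (j : ℂ)) • (D j * Bop n l) - (2 * (j : ℂ)) • (Bop n l * D j)
      = (2 * (j : ℂ) * ((j + l : ℕ) : ℂ)) • D (j + l) := by
    rw [ssub, opD_B n j l, add_sub_cancel_left]
    by_cases hj : j ∈ Ico 1 (n + 1)
    · rw [if_pos hj, ssmul]
    · have hj0 : j = 0 := by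
        simp only [mem_Ico] at hj
        omega
      rw [if_neg hj]
      subst hj0
      simp
  have quad : ∀ a ∈ Ico 1 j,
      ((a * (j - a) : ℕ) : ℂ) • (D (j - a) * D a) * Bop n l
        - Bop n l * (((a * (j - a) : ℕ) : ℂ) • (D (j - a) * D a))
      = (((a * (j - a) : ℕ) : ℂ) * ((j - a + l : ℕ) : ℂ)) • (D a * D (j - a + l))
        + (((a * (j - a) : ℕ) : ℂ) * ((a + l : ℕ) : ℂ)) • (D (j - a) * D (a + l)) := by
    intro a ha
    obtain ⟨ha1, ha2⟩ := mem_Ico.mp ha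
    have hmema : a ∈ Ico 1 (n + 1) := by
      simp only [mem_Ico]
      omega
    have hmemja : j - a ∈ Ico 1 (n + 1) := by
      simp only [mem_Ico]
      omega
    rw [smul_mul_assoc, mul_smul_comm, ssub, opDD_B n (j - a) a l hmemja hmema,
      add_sub_cancel_left, smul_add, ssmul, ssmul]
  calc (2 * (j : ℂ)) • (D j * Bop n l) + ∑ a ∈ Ico 1 j, ((a * (j - a) : ℕ) : ℂ) • (D (j - a) * D a) * Bop n l
      - ((2 * (j : ℂ)) • (Bop n l * D j) + ∑ a ∈ Ico 1 j, Bop n l * (((a * (j - a) : ℕ) : ℂ) • (D (j - a) * D a)))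
      = ((2 * (j : ℂ)) • (D j * Bop n l) - (2 * (j : ℂ)) • (Bop n l * D j))
        + ∑ a ∈ Ico 1 j, (((a * (j - a) : ℕ) : ℂ) • (D (j - a) * D a) * Bop n l
            - Bop n l * (((a * (j - a) : ℕ) : ℂ) • (D (j - a) * D a))) := by
        rw [Finset.sum_sub_distrib, add_sub_add_comm]
    _ = Cop j l := by
        rw [lin, Finset.sum_congr rfl quad, Cop, Finset.sum_add_distrib, add_assoc]

/-! ### commutation of the A parts -/

lemma commute_Top (j l : ℕ) : Commute (Top j) (Top l) := by
  have pr2 : ∀ a b c d : ℕ, Commute (D a * D b) (D c * D d) := fun a b c d =>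
    ((commute_D a c).mul_right (commute_D a d)).mul_left
      ((commute_D b c).mul_right (commute_D b d))
  have prD : ∀ a c d : ℕ, Commute (D a) (D c * D d) := fun a c d =>
    (commute_D a c).mul_right (commute_D a d)
  rw [Top, Top]
  refine Commute.add_left ?_ ?_
  · refine Commute.add_right ?_ ?_
    · exact ((commute_D j l).smul_left _).smul_right _
    · refine Commute.sum_right _ _ _ fun a _ => ?_
      exact ((prD j (l - a) a).smul_left _).smul_right _
  · refine Commute.add_right ?_ ?_
    · refine Commute.sum_left _ _ _ fun a _ => ?_
      exact (((prD l (j - a) a).symm).smul_left _).smul_right _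
    · refine Commute.sum_right _ _ _ fun a' _ => ?_
      refine Commute.sum_left _ _ _ fun a _ => ?_
      exact ((pr2 (j - a) a (l - a') a').smul_left _).smul_right _

/-! ### the B-B bracket (evaluated) -/

lemma Bop_mul (n j l : ℕ) : Bop n j * Bop n l =
    (∑ k ∈ Ico 1 (n+1), ∑ k' ∈ Ico 1 (n+1),
      (((k+j:ℕ):ℂ) * ((k'+l:ℕ):ℂ)) • (M k * (M k' * (D (k+j) * D (k'+l)))))
    + ∑ k ∈ Ico 1 (n+1), if k + j ∈ Ico 1 (n+1) then
        (((k+j:ℕ):ℂ) * (((k+j)+l:ℕ):ℂ)) • (M k * D ((k+j)+l)) else 0 := by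
  rw [Bop, Bop, Finset.sum_mul_sum]
  have key : ∀ k ∈ Ico 1 (n+1), ∀ k' ∈ Ico 1 (n+1),
      (((k+j:ℕ):ℂ) • (M k * D (k+j))) * (((k'+l:ℕ):ℂ) • (M k' * D (k'+l)))
      = (((k+j:ℕ):ℂ) * ((k'+l:ℕ):ℂ)) • (M k * (M k' * (D (k+j) * D (k'+l))))
        + (if k + j = k' then (((k+j:ℕ):ℂ) * ((k'+l:ℕ):ℂ)) • (M k * D (k'+l)) else 0) := by
    intro k _ k' _
    rw [smul_mul_smul_comm, opMD_MD, smul_add]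
    congr 1
    split_ifs <;> simp
  rw [Finset.sum_congr rfl (fun k hk => Finset.sum_congr rfl (fun k' hk' => key k hk k' hk'))]
  simp only [Finset.sum_add_distrib]
  congr 1
  refine Finset.sum_congr rfl fun k hk => ?_
  exact Finset.sum_ite_eq (Ico 1 (n+1)) (k+j)
      (fun k' => (((k+j:ℕ):ℂ) * ((k'+l:ℕ):ℂ)) • (M k * D (k'+l)))

lemma Bop_sym (n j l : ℕ) :
    (∑ k ∈ Ico 1 (n+1), ∑ k' ∈ Ico 1 (n+1),
      (((k+j:ℕ):ℂ) * ((k'+l:ℕ):ℂ)) • (M k * (M k' * (D (k+j) * D (k'+l)))))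
    = (∑ k ∈ Ico 1 (n+1), ∑ k' ∈ Ico 1 (n+1),
      (((k+l:ℕ):ℂ) * ((k'+j:ℕ):ℂ)) • (M k * (M k' * (D (k+l) * D (k'+j))))) := by
  rw [Finset.sum_comm]
  refine Finset.sum_congr rfl fun k' _ => Finset.sum_congr rfl fun k _ => ?_
  rw [opMMDD_comm, mul_comm]

lemma BB_bracket (n j l : ℕ) (Q : R) (hQ : Bdd n Q) :
    Bop n j (Bop n l Q) - Bop n l (Bop n j Q) = (((j:ℂ) - l) • Bop n (j+l)) Q := by
  have key : Bop n j (Bop n l Q) - Bop n l (Bop n j Q)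
      = (Bop n j * Bop n l) Q - (Bop n l * Bop n j) Q := rfl
  rw [key, Bop_mul, Bop_mul, Bop_sym n j l, LinearMap.add_apply, LinearMap.add_apply,
    add_sub_add_left_eq_sub]
  have ev : ∀ j l : ℕ, ((∑ k ∈ Ico 1 (n+1), if k + j ∈ Ico 1 (n+1) then
        (((k+j:ℕ):ℂ) * (((k+j)+l:ℕ):ℂ)) • (M k * D ((k+j)+l)) else 0) : Module.End ℂ R) Q
      = ∑ k ∈ Ico 1 (n+1), (((k+j:ℕ):ℂ) * ((k+j+l:ℕ):ℂ)) • (X k * pderiv (k+j+l) Q) := by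
    intro j l
    rw [LinearMap.sum_apply]
    refine Finset.sum_congr rfl fun k hk => ?_
    rw [apply_ite (fun f : Module.End ℂ R => f Q)]
    split_ifs with h
    · simp
    · have hk1 : 1 ≤ k := (mem_Ico.mp hk).1
      have : n < k + j + l := by
        simp only [mem_Ico] at h
        omega
      rw [LinearMap.zero_apply, hQ _ this, mul_zero, smul_zero]
  rw [ev, ev]
  have swap : ∀ k : ℕ, k + l + j = k + j + l := fun k => by ring
  simp only [swap]
  rw [← Finset.sum_sub_distrib, LinearMap.smul_apply, Bop, LinearMap.sum_apply, Finset.smul_sum]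
  refine Finset.sum_congr rfl fun k hk => ?_
  simp only [LinearMap.smul_apply, Module.End.mul_apply, D_apply, M_apply, smul_smul]
  have harg : k + (j + l) = k + j + l := by ring
  rw [harg, ← sub_smul]
  congr 1
  push_cast
  ring

/-! ### the main commutator identity for truncated operators -/

set_option maxHeartbeats 1000000 in
lemma main (N : ℂ) (n j l : ℕ) (h : j + l ≤ n) (Q : R) (hQ : Bdd n Q) :
    Lop N n j (Lop N n l Q) - Lop N n l (Lop N n j Q)
      = ((j : ℂ) - (l : ℂ)) • Lop N n (j + l) Q := by
  have hAB : ∀ j' l' : ℕ, j' + l' ≤ n →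
      Aop N j' * Bop n l' - Bop n l' * Aop N j' = (1 / N ^ 2) • Cop j' l' := by
    intro j' l' h'
    rw [Aop, smul_mul_assoc, mul_smul_comm, ssub, T_B_bracket n j' l' h']
  have hAA : Aop N j * Aop N l - Aop N l * Aop N j = 0 := by
    have : Commute (Aop N j) (Aop N l) :=
      ((commute_Top j l).smul_left _).smul_right _
    rw [this.eq, sub_self]
  have expand : Lop N n j (Lop N n l Q) - Lop N n l (Lop N n j Q)
      = ((Aop N j * Aop N l - Aop N l * Aop N j) Q
        + ((Aop N j * Bop n l - Bop n l * Aop N j) Q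
          - (Aop N l * Bop n j - Bop n j * Aop N l) Q))
        + (Bop n j (Bop n l Q) - Bop n l (Bop n j Q)) := by
    simp only [Lop, LinearMap.add_apply, map_add, LinearMap.sub_apply, Module.End.mul_apply]
    abel
  rw [expand, hAA, hAB j l h, hAB l j (by omega)]
  rw [BB_bracket n j l Q hQ]
  have hC : ((1 / N ^ 2) • Cop j l) Q - ((1 / N ^ 2) • Cop l j) Q
      = ((1 / N ^ 2) • (((j : ℂ) - l) • Top (j + l))) Q := by
    rw [← LinearMap.sub_apply, ssub, core]
  rw [LinearMap.zero_apply, zero_add, hC]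
  simp only [Lop, Aop, LinearMap.add_apply, LinearMap.smul_apply, smul_add, smul_smul]
  rw [mul_comm]


lemma virasoroL_eq (N : ℂ) (j n : ℕ) (Q : R) (hQ : Bdd n Q) :
    virasoroL N j Q = Lop N n j Q := by
  have hfin : ∑ᶠ k : ℕ, (if 1 ≤ k then ((k + j : ℕ) : ℂ) • (X k * pderiv (k + j) Q) else 0)
      = ∑ k ∈ Ico 1 (n + 1), (if 1 ≤ k then ((k + j : ℕ) : ℂ) • (X k * pderiv (k + j) Q) else 0) := by
    refine finsum_eq_sum_of_support_subset _ ?_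
    intro k hk
    simp only [Function.mem_support] at hk
    simp only [Finset.coe_Ico, Set.mem_Ico]
    by_contra hc
    push_neg at hc
    rcases le_or_gt 1 k with h1 | h1
    · have : n + 1 ≤ k := hc h1
      have : pderiv (k + j) Q = 0 := hQ _ (by omega)
      simp [h1, this] at hk
    · have : ¬ (1 ≤ k) := by omega
      simp [this] at hk
  rw [virasoroL, hfin]
  have h2 : ∑ k ∈ Ico 1 (n + 1), (if 1 ≤ k then ((k + j : ℕ) : ℂ) • (X k * pderiv (k + j) Q) else 0)
      = ∑ k ∈ Ico 1 (n + 1), ((k + j : ℕ) : ℂ) • (X k * pderiv (k + j) Q) := by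
    refine Finset.sum_congr rfl fun k hk => ?_
    rw [if_pos (mem_Ico.mp hk).1]
  rw [h2]
  simp [Lop, Aop, Top, Bop, LinearMap.sum_apply, LinearMap.smul_apply, Module.End.mul_apply,
    LinearMap.add_apply, smul_add]

lemma bdd_lop (N : ℂ) (n j : ℕ) (Q : R) (hQ : Bdd n Q) : Bdd n (Lop N n j Q) := by
  intro m hm
  show D m (Lop N n j Q) = 0
  simp only [Lop, Aop, Top, Bop, LinearMap.add_apply, LinearMap.smul_apply, LinearMap.sum_apply,
    Module.End.mul_apply, map_smul, map_add, map_sum, D_apply, M_apply]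
  have h1 : pderiv m (pderiv j Q) = 0 := by rw [pderiv_comm', hQ m hm, map_zero]
  have h2 : ∀ a ∈ Ico 1 j, ((a * (j - a) : ℕ) : ℂ) • pderiv m (pderiv (j - a) (pderiv a Q)) = 0 := by
    intro a _
    rw [pderiv_comm' m (j - a), pderiv_comm' m a, hQ m hm]
    simp
  have h3 : ∀ k ∈ Ico 1 (n + 1), ((k + j : ℕ) : ℂ) • pderiv m (X k * pderiv (k + j) Q) = 0 := by
    intro k hk
    have hkn : k ≠ m := by have := (mem_Ico.mp hk).2; omega
    rw [pderiv_mul, pderiv_X_of_ne hkn, pderiv_comm', hQ m hm]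
    simp
  rw [h1, Finset.sum_congr rfl h2, Finset.sum_congr rfl h3]
  simp

end
end VirasoroProof

/-- The discrete Virasoro operators satisfy `[L_j, L_l] = (j - l) L_{j+l}`. -/
theorem virasoro_commutation (N : ℂ) (hN : N ≠ 0) (j l : ℕ) (P : MvPolynomial ℕ ℂ) :
    virasoroL N j (virasoroL N l P) - virasoroL N l (virasoroL N j P)
      = ((j : ℂ) - (l : ℂ)) • virasoroL N (j + l) P := by
  classical
  set n := j + l + P.vars.sup id with hn
  have hP : VirasoroProof.Bdd n P := by
    intro m hm
    apply pderiv_eq_zero_of_notMem_vars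
    intro hmem
    have : m ≤ P.vars.sup id := Finset.le_sup (f := id) hmem
    omega
  have hjl : j + l ≤ n := by omega
  have hbl : VirasoroProof.Bdd n (VirasoroProof.Lop N n l P) := VirasoroProof.bdd_lop N n l P hP
  have hbj : VirasoroProof.Bdd n (VirasoroProof.Lop N n j P) := VirasoroProof.bdd_lop N n j P hP
  rw [VirasoroProof.virasoroL_eq N l n P hP, VirasoroProof.virasoroL_eq N j n P hP,
    VirasoroProof.virasoroL_eq N (j + l) n P hP,
    VirasoroProof.virasoroL_eq N j n _ hbl, VirasoroProof.virasoroL_eq N l n _ hbj]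
  exact VirasoroProof.main N n j l hjl P hP
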